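/- For all a, b, c, d > 0, μ₁, μ₂ ∈ ℝ and every fixed x₁ ∈ ℝ, integrating the 3-dimensional Full Rosenbrock kernel over x₂ and x₃ yields ∫_ℝ ∫_ℝ exp(−a(x₁−μ₁)² − b(x₂−x₁²)² − c(x₂−μ₂)² − d(x₃−x₂²)²) dx₃ dx₂ = (π/√(d(b+c))) · exp(−a(x₁−μ₁)² − (bc/(b+c))·(x₁²−μ₂)²). Consequently the x₁-marginal of the 3-dimensional Full Rosenbrock density is no longer a Gaussian kernel in x₁, since it acquires the extra factor exp(−(bc/(b+c))(x₁²−μ₂)²). -/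

import Mathlib

open MeasureTheory Real

lemma gauss_shift (t : ℝ) (s : ℝ) :
    ∫ x : ℝ, Real.exp (-t * (x - s) ^ 2) = Real.sqrt (π / t) := by
  rw [show (fun x : ℝ => Real.exp (-t * (x - s) ^ 2))
      = (fun x : ℝ => Real.exp (-t * x ^ 2)) ∘ (fun x => x - s) by funext x; simp]
  rw [Function.comp_def, integral_sub_right_eq_self (fun x : ℝ => Real.exp (-t * x ^ 2)) s]
  exact integral_gaussian t

lemma gauss_prod (b c p q : ℝ) (hb : 0 < b) (hc : 0 < c) :
    ∫ x : ℝ, Real.exp (-b * (x - p) ^ 2 - c * (x - q) ^ 2)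
      = Real.sqrt (π / (b + c)) * Real.exp (-(b * c / (b + c)) * (p - q) ^ 2) := by
  have hbc : 0 < b + c := by linarith
  have key : ∀ x : ℝ, -b * (x - p) ^ 2 - c * (x - q) ^ 2
      = -(b + c) * (x - (b * p + c * q) / (b + c)) ^ 2 + -(b * c / (b + c)) * (p - q) ^ 2 := by
    intro x; field_simp; ring
  simp_rw [key, Real.exp_add, integral_mul_const]
  rw [gauss_shift]

theorem fullRosenbrock3d_integrate_x2_x3 (a b c d μ₁ μ₂ : ℝ)
    (ha : 0 < a) (hb : 0 < b) (hc : 0 < c) (hd : 0 < d) (x₁ : ℝ) :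
    ∫ x₂ : ℝ, ∫ x₃ : ℝ,
        Real.exp (-a * (x₁ - μ₁) ^ 2 - b * (x₂ - x₁ ^ 2) ^ 2
          - c * (x₂ - μ₂) ^ 2 - d * (x₃ - x₂ ^ 2) ^ 2)
      = (π / Real.sqrt (d * (b + c))) *
          Real.exp (-a * (x₁ - μ₁) ^ 2 - (b * c / (b + c)) * (x₁ ^ 2 - μ₂) ^ 2) := by
  have hbc : 0 < b + c := by linarith
  have inner : ∀ x₂ : ℝ, ∫ x₃ : ℝ,
      Real.exp (-a * (x₁ - μ₁) ^ 2 - b * (x₂ - x₁ ^ 2) ^ 2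
        - c * (x₂ - μ₂) ^ 2 - d * (x₃ - x₂ ^ 2) ^ 2)
      = Real.exp (-a * (x₁ - μ₁) ^ 2) * Real.sqrt (π / d) *
          Real.exp (-b * (x₂ - x₁ ^ 2) ^ 2 - c * (x₂ - μ₂) ^ 2) := by
    intro x₂
    have : ∀ x₃ : ℝ, Real.exp (-a * (x₁ - μ₁) ^ 2 - b * (x₂ - x₁ ^ 2) ^ 2
        - c * (x₂ - μ₂) ^ 2 - d * (x₃ - x₂ ^ 2) ^ 2)
        = (Real.exp (-a * (x₁ - μ₁) ^ 2) * Real.exp (-b * (x₂ - x₁ ^ 2) ^ 2 - c * (x₂ - μ₂) ^ 2))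
          * Real.exp (-d * (x₃ - x₂ ^ 2) ^ 2) := by
      intro x₃; rw [← Real.exp_add, ← Real.exp_add]; ring_nf
    simp_rw [this, integral_const_mul, gauss_shift d (x₂ ^ 2)]
    ring
  simp_rw [inner, integral_const_mul, gauss_prod b c (x₁ ^ 2) μ₂ hb hc]
  rw [show Real.exp (-a * (x₁ - μ₁) ^ 2 - b * c / (b + c) * (x₁ ^ 2 - μ₂) ^ 2)
      = Real.exp (-a * (x₁ - μ₁) ^ 2) * Real.exp (-(b * c / (b + c)) * (x₁ ^ 2 - μ₂) ^ 2) by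
        rw [← Real.exp_add]; ring_nf]
  have hsq : Real.sqrt (π / d) * Real.sqrt (π / (b + c)) = π / Real.sqrt (d * (b + c)) := by
    rw [← Real.sqrt_mul (by positivity),
      show π / d * (π / (b + c)) = π ^ 2 / (d * (b + c)) by field_simp,
      Real.sqrt_div (by positivity), Real.sqrt_sq Real.pi_pos.le]
  rw [← hsq]; ring
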